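/- Let v1 ≥ v2 > 0 and η = v2/2. With the equilibrium distributions F1(x) = η/(v2-x) (density f(x) = η/(v2-x)² on (0, v2-η], atom η/v2 at 0) and G2 as above, the probability that bidder 2's bid strictly exceeds bidder 1's bid equals v2(2v1-v2)/(4(v1-v2)²) · ( ln((2v1-v2)/v1) - v2(v1-v2)/(v1(2v1-v2)) ) for v1 > v2. -/

import Mathlib

open intervalIntegral

/- With `η = v2/2`, equilibrium CDFs `F1(x) = η/(v2-x)` and `G2(x) = (v1-v2+η)/(v1-x)`
on `[0, v2-η]`, the probability that bidder 2's bid strictly exceeds bidder 1's bid,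
`Pr[b2 > b1] = ∫₀^{v2-η} F1(x) g2(x) dx` with density `g2(x) = (v1-v2+η)/(v1-x)²`,
has the stated closed form. -/

theorem stmt_8 (v1 v2 : ℝ) (hv2 : 0 < v2) (hv : v2 < v1) :
    ∫ x in (0 : ℝ)..(v2 - v2 / 2),
        (v2 / 2) / (v2 - x) * ((v1 - v2 + v2 / 2) / (v1 - x) ^ 2)
      = v2 * (2 * v1 - v2) / (4 * (v1 - v2) ^ 2) *
          (Real.log ((2 * v1 - v2) / v1) - v2 * (v1 - v2) / (v1 * (2 * v1 - v2))) := by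
  have hv1 : (0:ℝ) < v1 := by linarith
  have hd : (0:ℝ) < v1 - v2 := by linarith
  have h2v : (0:ℝ) < 2 * v1 - v2 := by linarith
  set c := v2 / 2 * (v1 - v2 + v2 / 2) with hc
  set d := v1 - v2 with hdd
  set F : ℝ → ℝ := fun y =>
    c * ((Real.log (v1 - y) - Real.log (v2 - y)) / d ^ 2 - (d * (v1 - y))⁻¹) with hF
  have key : ∫ x in (0:ℝ)..(v2 - v2 / 2),
      (v2 / 2) / (v2 - x) * ((v1 - v2 + v2 / 2) / (v1 - x) ^ 2)
      = F (v2 - v2 / 2) - F 0 := by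
    apply intervalIntegral.integral_eq_sub_of_hasDerivAt
    · intro x hx
      rw [Set.uIcc_of_le (by linarith)] at hx
      obtain ⟨hx0, hx1⟩ := hx
      have h1 : (0:ℝ) < v1 - x := by linarith
      have h2 : (0:ℝ) < v2 - x := by linarith
      have hL1 : HasDerivAt (fun y => Real.log (v1 - y)) ((0 - 1) / (v1 - x)) x :=
        (((hasDerivAt_const x v1).sub (hasDerivAt_id x))).log h1.ne'
      have hL2 : HasDerivAt (fun y => Real.log (v2 - y)) ((0 - 1) / (v2 - x)) x :=
        (((hasDerivAt_const x v2).sub (hasDerivAt_id x))).log h2.ne'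
      have hlin : HasDerivAt (fun y => d * (v1 - y)) (d * (0 - 1)) x :=
        (((hasDerivAt_const x v1).sub (hasDerivAt_id x))).const_mul d
      have hInv : HasDerivAt (fun y => (d * (v1 - y))⁻¹)
          (-(d * (0 - 1)) / (d * (v1 - x)) ^ 2) x :=
        hlin.inv (by positivity)
      have := (((hL1.sub hL2).div_const (d ^ 2)).sub hInv).const_mul c
      convert this using 1
      · rfl
      · rfl
      have hd0 : d ≠ 0 := hd.ne'
      field_simp
      ring
    · apply ContinuousOn.intervalIntegrable
      apply ContinuousOn.mul
      · apply ContinuousOn.div continuousOn_const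
        · exact (continuousOn_const.sub continuousOn_id)
        · intro x hx
          rw [Set.uIcc_of_le (by linarith)] at hx
          have : (0:ℝ) < v2 - x := by linarith [hx.2]
          exact this.ne'
      · apply ContinuousOn.div continuousOn_const
        · exact ((continuousOn_const.sub continuousOn_id).pow 2)
        · intro x hx
          rw [Set.uIcc_of_le (by linarith)] at hx
          have : (0:ℝ) < v1 - x := by linarith [hx.2]
          positivity
  rw [key, hF]
  simp only
  have e1 : v1 - (v2 - v2 / 2) = (2 * v1 - v2) / 2 := by ring
  have e2 : v2 - (v2 - v2 / 2) = v2 / 2 := by ring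
  have e3 : v1 - (0:ℝ) = v1 := by ring
  have e4 : v2 - (0:ℝ) = v2 := by ring
  rw [e1, e2, e3, e4, Real.log_div h2v.ne' two_ne_zero, Real.log_div hv2.ne' two_ne_zero,
    Real.log_div h2v.ne' hv1.ne']
  have hd0 : d ≠ 0 := hd.ne'
  field_simp
  ring
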